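/- Suppose n = 2m. For any observed count vector n⃗ and any α ∈ (0,1), the length of the exact confidence interval satisfies |I_α(n⃗)| = U_α(n⃗) − L_α(n⃗) ≤ √(32 log(2/α) / n); in particular the exact interval shrinks at the parametric rate n^{−1/2}. -/

import Mathlib

open Finset

/-- Real value of a binary outcome. -/
noncomputable def b2r (b : Bool) : ℝ := if b then 1 else 0

/-- All assignments of `n` subjects in which exactly `m` receive treatment. -/
def Assign (n m : ℕ) : Finset (Fin n → Bool) :=
  Finset.univ.filter fun z => (Finset.univ.filter fun i => z i = true).card = m

/-- Probability of the event `E` under the uniform distribution on `Assign n m`. -/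
noncomputable def Pr (n m : ℕ) (E : (Fin n → Bool) → Prop) : ℝ :=
  haveI : DecidablePred E := fun z => Classical.propDecidable (E z)
  (((Assign n m).filter E).card : ℝ) / ((Assign n m).card : ℝ)

/-- The sample average treatment effect `τ(w)`.  For a table `w`, `(w i).1` is the
control potential outcome `w_i(0)` and `(w i).2` is the treatment potential outcome
`w_i(1)`. -/
noncomputable def sate (n : ℕ) (w : Fin n → Bool × Bool) : ℝ :=
  (∑ j, (b2r (w j).2 - b2r (w j).1)) / (n : ℝ)

/-- Observed outcomes generated by the table `w` under the assignment `z`. -/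
def obsOutcome (n : ℕ) (w : Fin n → Bool × Bool) (z : Fin n → Bool) : Fin n → Bool :=
  fun j => if z j then (w j).2 else (w j).1

/-- The Neyman difference-in-means estimator `T(Y, z)`. -/
noncomputable def neyman (n m : ℕ) (Y z : Fin n → Bool) : ℝ :=
  (∑ j, if z j then b2r (Y j) else 0) / (m : ℝ)
    - (∑ j, if z j then 0 else b2r (Y j)) / ((n : ℝ) - (m : ℝ))

/-- Permutation `p`-value of the table `w` given observed data `(Y, z)`. -/
noncomputable def pval (n m : ℕ) (w : Fin n → Bool × Bool) (Y z : Fin n → Bool) : ℝ :=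
  Pr n m fun z' =>
    |neyman n m (obsOutcome n w z') z' - sate n w| ≥ |neyman n m Y z - sate n w|

/-- The table `w` is possible given the observed data `(Y, z)`. -/
def PossibleTable (n : ℕ) (w : Fin n → Bool × Bool) (Y z : Fin n → Bool) : Prop :=
  ∀ j, (z j = true → (w j).2 = Y j) ∧ (z j = false → (w j).1 = Y j)

/-- Lower endpoint `L_α` of the exact confidence interval `I_α`. -/
noncomputable def Lb (n m : ℕ) (α : ℝ) (Y z : Fin n → Bool) : ℝ :=
  sInf {t : ℝ | ∃ w, PossibleTable n w Y z ∧ α ≤ pval n m w Y z ∧ sate n w = t}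

/-- Upper endpoint `U_α` of the exact confidence interval `I_α`. -/
noncomputable def Ub (n m : ℕ) (α : ℝ) (Y z : Fin n → Bool) : ℝ :=
  sSup {t : ℝ | ∃ w, PossibleTable n w Y z ∧ α ≤ pval n m w Y z ∧ sate n w = t}

/-- `vcount n w a b` is the number of subjects whose treatment potential outcome is `a`
and whose control potential outcome is `b`; e.g. `vcount n w true false = v₁₀`. -/
def vcount (n : ℕ) (w : Fin n → Bool × Bool) (a b : Bool) : ℕ :=
  (Finset.univ.filter fun i => (w i).2 = a ∧ (w i).1 = b).card

/-- `ncount n Y z a b = n_{ab}`, the number of subjects with assignment `a` and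
observed outcome `b`. -/
def ncount (n : ℕ) (Y z : Fin n → Bool) (a b : Bool) : ℕ :=
  (Finset.univ.filter fun j => z j = a ∧ Y j = b).card

/-- The pmf of the Neyman estimator `T(w, Z)` under the uniform random assignment. -/
noncomputable def pmfT (n m : ℕ) (w : Fin n → Bool × Bool) : ℝ → ℝ :=
  fun t => Pr n m fun z => neyman n m (obsOutcome n w z) z = t

/-- The lattice `m⁻¹ ℤ ⊆ ℝ`. -/
def lattZ (m : ℕ) : Set ℝ := {x | ∃ k : ℤ, x = (k : ℝ) / (m : ℝ)}

/-- The lattice `m⁻¹ (2ℤ) ⊆ ℝ`. -/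
def lattEven (m : ℕ) : Set ℝ := {x | ∃ k : ℤ, x = (2 * (k : ℝ)) / (m : ℝ)}

/-- The lattice `m⁻¹ (2ℤ + 1) ⊆ ℝ`. -/
def lattOdd (m : ℕ) : Set ℝ := {x | ∃ k : ℤ, x = (2 * (k : ℝ) + 1) / (m : ℝ)}

/-- `f` is symmetric about `μ` and decreasing away from `μ` along the lattice `L`
(symmetric–decreasing, SD). -/
def SDon (f : ℝ → ℝ) (L : Set ℝ) (μ : ℝ) : Prop :=
  (∀ x : ℝ, μ + x ∈ L → f (μ - x) = f (μ + x)) ∧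
    ∀ x y : ℝ, 0 ≤ x → x ≤ y → μ + x ∈ L → μ + y ∈ L → f (μ + y) ≤ f (μ + x)


namespace Stmt2Aux

variable (m : ℕ)

/-- Coordinates: pair index and slot. -/
def EE (m : ℕ) : Fin (2 * m) ≃ Fin m × Bool :=
  ((finCongr (by ring : 2 * m = m * 2)).trans finProdFinEquiv.symm).trans
    (Equiv.prodCongr (Equiv.refl _) finTwoEquiv)

/-- Assignment induced by a permutation. -/
def phi (m : ℕ) (π : Equiv.Perm (Fin (2 * m))) : Fin (2 * m) → Bool :=
  fun i => (EE m (π i)).2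

lemma card_snd_true : (univ.filter fun p : Fin m × Bool => p.2 = true).card = m := by
  rw [Finset.card_filter]
  rw [Fintype.sum_prod_type]
  simp

lemma phi_mem (π : Equiv.Perm (Fin (2 * m))) : phi m π ∈ Assign (2 * m) m := by
  simp only [Assign, mem_filter, mem_univ, true_and]
  refine Eq.trans ?_ (card_snd_true m)
  apply Finset.card_bij (fun i _ => EE m (π i))
  · intro a ha; simp only [mem_filter, mem_univ, true_and] at ha ⊢; exact ha
  · intro a _ b _ h
    exact π.injective ((EE m).injective h)
  · intro p hp
    refine ⟨π.symm ((EE m).symm p), ?_, by simp⟩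
    simp only [mem_filter, mem_univ, true_and] at hp ⊢
    simpa [phi] using hp

/-- The fiber of `phi` over `z`. -/
def fiber (m : ℕ) (z : Fin (2 * m) → Bool) : Finset (Equiv.Perm (Fin (2 * m))) :=
  univ.filter fun π => phi m π = z

lemma exists_perm_comp (z z' : Fin (2 * m) → Bool) (hz : z ∈ Assign (2 * m) m)
    (hz' : z' ∈ Assign (2 * m) m) : ∃ g : Equiv.Perm (Fin (2 * m)), ∀ i, z (g i) = z' i := by
  simp only [Assign, mem_filter, mem_univ, true_and] at hz hz'
  have hcard : Fintype.card {i : Fin (2*m) // z' i = true} = Fintype.card {i : Fin (2*m) // z i = true} := by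
    rw [Fintype.card_subtype, Fintype.card_subtype, hz, hz']
  have hcardc : Fintype.card {i : Fin (2*m) // ¬ z' i = true} = Fintype.card {i : Fin (2*m) // ¬ z i = true} := by
    rw [Fintype.card_subtype_compl, Fintype.card_subtype_compl, Fintype.card_subtype,
      Fintype.card_subtype, hz, hz']
  refine ⟨Equiv.subtypeCongr (Fintype.equivOfCardEq hcard) (Fintype.equivOfCardEq hcardc), fun i => ?_⟩
  by_cases h : z' i = true
  · have : Equiv.subtypeCongr (Fintype.equivOfCardEq hcard) (Fintype.equivOfCardEq hcardc) i
        = ((Fintype.equivOfCardEq hcard) ⟨i, h⟩ : Fin (2*m)) := by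
      simp [Equiv.subtypeCongr, h]
    rw [this, h]
    exact ((Fintype.equivOfCardEq hcard) ⟨i, h⟩).2
  · have : Equiv.subtypeCongr (Fintype.equivOfCardEq hcard) (Fintype.equivOfCardEq hcardc) i
        = ((Fintype.equivOfCardEq hcardc) ⟨i, h⟩ : Fin (2*m)) := by
      simp [Equiv.subtypeCongr, h]
    rw [this]
    have := ((Fintype.equivOfCardEq hcardc) ⟨i, h⟩).2
    simp only [Bool.not_eq_true] at this h
    rw [this, h]

lemma fiber_card_const (z z' : Fin (2 * m) → Bool) (hz : z ∈ Assign (2 * m) m)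
    (hz' : z' ∈ Assign (2 * m) m) : (fiber m z).card = (fiber m z').card := by
  obtain ⟨g, hg⟩ := exists_perm_comp m z z' hz hz'
  apply Finset.card_bij' (fun π _ => g.trans π) (fun π _ => g.symm.trans π)
  · intro π hπ
    simp only [fiber, mem_filter, mem_univ, true_and] at hπ ⊢
    funext i
    simp only [phi, Equiv.trans_apply]
    rw [show (EE m (π (g i))).2 = phi m π (g i) from rfl, hπ, hg]
  · intro π hπ
    simp only [fiber, mem_filter, mem_univ, true_and] at hπ ⊢
    funext i
    simp only [phi, Equiv.trans_apply]
    rw [show (EE m (π (g.symm i))).2 = phi m π (g.symm i) from rfl, hπ]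
    have := hg (g.symm i)
    simpa using this.symm
  · intro π _; ext i; simp
  · intro π _; ext i; simp

/-- The common fiber cardinality. -/
def K (m : ℕ) : ℕ := (fiber m (phi m 1)).card

lemma transfer (g : (Fin (2 * m) → Bool) → ℝ) :
    ∑ π : Equiv.Perm (Fin (2 * m)), g (phi m π)
      = (K m : ℝ) * ∑ z ∈ Assign (2 * m) m, g z := by
  rw [← Finset.sum_fiberwise_of_maps_to (fun π _ => phi_mem m π) (fun π => g (phi m π))]
  rw [Finset.mul_sum]
  refine Finset.sum_congr rfl fun z hz => ?_
  have h1 : ∀ π ∈ univ.filter fun π => phi m π = z, g (phi m π) = g z := by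
    intro π hπ
    simp only [mem_filter, mem_univ, true_and] at hπ
    rw [hπ]
  rw [Finset.sum_congr rfl h1, Finset.sum_const, nsmul_eq_mul]
  have : (univ.filter fun π => phi m π = z) = fiber m z := rfl
  rw [this, fiber_card_const m z (phi m 1) hz (phi_mem m 1)]
  rfl

lemma factorial_eq : (Nat.factorial (2 * m) : ℝ) = (K m : ℝ) * ((Assign (2 * m) m).card : ℝ) := by
  have := transfer m (fun _ => (1 : ℝ))
  simp only [Finset.sum_const, nsmul_eq_mul, mul_one, Finset.card_univ] at this
  rw [Fintype.card_perm, Fintype.card_fin] at this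
  exact_mod_cast this

lemma K_pos : 0 < K m := by
  by_contra h
  push_neg at h
  interval_cases hK : K m
  have := factorial_eq m
  rw [hK] at this
  simp at this
  exact Nat.factorial_ne_zero _ (by exact_mod_cast this)

/-- Flip the slot in each pair according to `ε`. -/
def flipP (m : ℕ) (ε : Fin m → Bool) : Equiv.Perm (Fin m × Bool) where
  toFun p := (p.1, xor (ε p.1) p.2)
  invFun p := (p.1, xor (ε p.1) p.2)
  left_inv p := by cases h : ε p.1 <;> cases p.2 <;> simp [h]
  right_inv p := by cases h : ε p.1 <;> cases p.2 <;> simp [h]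

def tau (m : ℕ) (ε : Fin m → Bool) : Equiv.Perm (Fin (2 * m)) :=
  (EE m).trans ((flipP m ε).trans (EE m).symm)

/-- The treated-sum statistic. -/
noncomputable def Sst (m : ℕ) (c : Fin (2 * m) → ℝ) (z : Fin (2 * m) → Bool) : ℝ :=
  ∑ i, if z i then c i else 0

lemma sum_flip_eq (c : Fin (2 * m) → ℝ) (l : ℝ) (π : Equiv.Perm (Fin (2 * m))) :
    ∑ ε : Fin m → Bool,
        Real.exp (l * (Sst m c (phi m (tau m ε * π)) - (∑ i, c i) / 2))
      = ∏ k : Fin m,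
          (Real.exp (l * ((c (π.symm ((EE m).symm (k, false)))
              - c (π.symm ((EE m).symm (k, true)))) / 2))
            + Real.exp (l * ((c (π.symm ((EE m).symm (k, true)))
              - c (π.symm ((EE m).symm (k, false)))) / 2))) := by
  set u : Fin m × Bool → ℝ := fun p => c (π.symm ((EE m).symm p)) with hu
  have hS : ∀ ε : Fin m → Bool, Sst m c (phi m (tau m ε * π))
      = ∑ k : Fin m, (if ε k then u (k, false) else u (k, true)) := by
    intro ε
    have h1 : Sst m c (phi m (tau m ε * π))
        = ∑ p : Fin m × Bool, (if xor (ε p.1) p.2 then u p else 0) := by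
      rw [Sst, ← Equiv.sum_comp (π.trans (EE m))
        (fun p => if xor (ε p.1) p.2 then u p else 0)]
      refine Finset.sum_congr rfl fun i _ => ?_
      simp [phi, tau, flipP, hu, Equiv.Perm.mul_apply]
    rw [h1, Fintype.sum_prod_type]
    refine Finset.sum_congr rfl fun k _ => ?_
    rw [Fintype.sum_bool]
    cases h : ε k <;> simp [h]
  have hmu : (∑ i, c i) / 2 = ∑ k : Fin m, (u (k, true) + u (k, false)) / 2 := by
    have : ∑ i, c i = ∑ p : Fin m × Bool, u p := by
      rw [← Equiv.sum_comp (π.trans (EE m)).symm c]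
      rfl
    rw [this, Fintype.sum_prod_type, ← Finset.sum_div]
    congr 1
    refine Finset.sum_congr rfl fun k _ => ?_
    rw [Fintype.sum_bool]
  have key : ∀ ε : Fin m → Bool,
      Real.exp (l * (Sst m c (phi m (tau m ε * π)) - (∑ i, c i) / 2))
        = ∏ k : Fin m, Real.exp (l * ((if ε k then u (k, false) else u (k, true))
            - (u (k, true) + u (k, false)) / 2)) := by
    intro ε
    rw [← Real.exp_sum, hS, hmu, ← Finset.sum_sub_distrib, Finset.mul_sum]
  rw [Finset.sum_congr rfl fun ε _ => key ε]
  have hps := Finset.prod_univ_sum (fun _ : Fin m => (univ : Finset Bool))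
    (fun k b => Real.exp (l * ((if b then u (k, false) else u (k, true))
      - (u (k, true) + u (k, false)) / 2)))
  rw [Fintype.piFinset_univ] at hps
  rw [← hps]
  refine Finset.prod_congr rfl fun k _ => ?_
  rw [Fintype.sum_bool]
  norm_num
  congr 1 <;> exact congrArg Real.exp (by ring)

lemma mgf_bound (c : Fin (2 * m) → ℝ) (hc0 : ∀ i, 0 ≤ c i) (hc2 : ∀ i, c i ≤ 2) (l : ℝ) :
    ∑ π : Equiv.Perm (Fin (2 * m)),
        Real.exp (l * (Sst m c (phi m π) - (∑ i, c i) / 2))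
      ≤ (Nat.factorial (2 * m) : ℝ) * Real.exp (m * l ^ 2 / 2) := by
  set F : Equiv.Perm (Fin (2 * m)) → ℝ :=
    fun π => Real.exp (l * (Sst m c (phi m π) - (∑ i, c i) / 2)) with hF
  have hfix : ∀ ε : Fin m → Bool, ∑ π : Equiv.Perm (Fin (2 * m)), F (tau m ε * π)
      = ∑ π : Equiv.Perm (Fin (2 * m)), F π := by
    intro ε
    exact Equiv.sum_comp (Equiv.mulLeft (tau m ε)) F
  have step1 : (2 ^ m : ℝ) * ∑ π : Equiv.Perm (Fin (2 * m)), F π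
      = ∑ π : Equiv.Perm (Fin (2 * m)), ∑ ε : Fin m → Bool, F (tau m ε * π) := by
    rw [Finset.sum_comm]
    rw [Finset.sum_congr rfl fun ε _ => hfix ε, Finset.sum_const, Finset.card_univ]
    simp [nsmul_eq_mul, Fintype.card_fun]
  have step2 : ∀ π : Equiv.Perm (Fin (2 * m)), ∑ ε : Fin m → Bool, F (tau m ε * π)
      ≤ (2 ^ m : ℝ) * Real.exp (m * l ^ 2 / 2) := by
    intro π
    rw [hF]
    rw [sum_flip_eq m c l π]
    have hbd : ∀ k : Fin m,
        Real.exp (l * ((c (π.symm ((EE m).symm (k, false)))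
            - c (π.symm ((EE m).symm (k, true)))) / 2))
          + Real.exp (l * ((c (π.symm ((EE m).symm (k, true)))
            - c (π.symm ((EE m).symm (k, false)))) / 2))
          ≤ 2 * Real.exp (l ^ 2 / 2) := by
      intro k
      set d : ℝ := (c (π.symm ((EE m).symm (k, false)))
        - c (π.symm ((EE m).symm (k, true)))) / 2 with hd
      have h2 : Real.exp (l * d) + Real.exp (l * -d) = 2 * Real.cosh (l * d) := by
        rw [Real.cosh_eq, mul_neg]; ring
      have h3 : (l * ((c (π.symm ((EE m).symm (k, true)))
          - c (π.symm ((EE m).symm (k, false)))) / 2)) = l * -d := by rw [hd]; ring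
      rw [h3, h2]
      have hd1 : |d| ≤ 1 := by
        rw [hd, abs_div, abs_of_pos (by norm_num : (0:ℝ) < 2), div_le_one (by norm_num)]
        have := hc0 (π.symm ((EE m).symm (k, true)))
        have := hc2 (π.symm ((EE m).symm (k, false)))
        have := hc0 (π.symm ((EE m).symm (k, false)))
        have := hc2 (π.symm ((EE m).symm (k, true)))
        rw [abs_le]; constructor <;> linarith
      have : Real.cosh (l * d) ≤ Real.exp (l ^ 2 / 2) := by
        calc Real.cosh (l * d) ≤ Real.exp ((l * d) ^ 2 / 2) := Real.cosh_le_exp_half_sq _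
          _ ≤ Real.exp (l ^ 2 / 2) := by
            apply Real.exp_le_exp.2
            have hd2 : d ^ 2 ≤ 1 := by nlinarith [sq_abs d, abs_nonneg d]
            have : (l * d) ^ 2 ≤ l ^ 2 := by
              rw [mul_pow]
              nlinarith [sq_nonneg l]
            linarith
      linarith [Real.exp_pos (l ^ 2 / 2)]
    calc ∏ k : Fin m, _ ≤ ∏ _k : Fin m, (2 * Real.exp (l ^ 2 / 2)) := by
          apply Finset.prod_le_prod
          · intro k _; positivity
          · intro k _; exact hbd k
      _ = (2 ^ m : ℝ) * Real.exp (m * l ^ 2 / 2) := by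
          rw [Finset.prod_const, Finset.card_univ, Fintype.card_fin, mul_pow,
            ← Real.exp_nat_mul]
          ring_nf
  have hsum : (2 ^ m : ℝ) * ∑ π : Equiv.Perm (Fin (2 * m)), F π
      ≤ ∑ _π : Equiv.Perm (Fin (2 * m)), (2 ^ m : ℝ) * Real.exp (m * l ^ 2 / 2) := by
    rw [step1]; exact Finset.sum_le_sum fun π _ => step2 π
  rw [Finset.sum_const, Finset.card_univ, Fintype.card_perm, Fintype.card_fin,
    nsmul_eq_mul] at hsum
  have h2m : (0:ℝ) < 2 ^ m := by positivity
  calc ∑ π : Equiv.Perm (Fin (2 * m)), F π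
      = ((2 ^ m : ℝ) * ∑ π : Equiv.Perm (Fin (2 * m)), F π) / 2 ^ m := by
        field_simp
    _ ≤ ((Nat.factorial (2 * m) : ℝ) * ((2 ^ m : ℝ) * Real.exp (m * l ^ 2 / 2))) / 2 ^ m := by
        gcongr
    _ = (Nat.factorial (2 * m) : ℝ) * Real.exp (m * l ^ 2 / 2) := by field_simp

lemma chernoff_one (c : Fin (2 * m) → ℝ) (hc0 : ∀ i, 0 ≤ c i) (hc2 : ∀ i, c i ≤ 2)
    (t : ℝ) (ht : 0 ≤ t) :
    ((((Assign (2 * m) m).filter fun z => (m : ℝ) * t ≤ Sst m c z - (∑ i, c i) / 2).card : ℝ))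
      ≤ (((Assign (2 * m) m).card : ℝ)) * Real.exp (-((m : ℝ) * t ^ 2) / 2) := by
  have hK : (0 : ℝ) < (K m : ℝ) := by exact_mod_cast K_pos m
  have hmgfA : ∑ z ∈ Assign (2 * m) m, Real.exp (t * (Sst m c z - (∑ i, c i) / 2))
      ≤ (((Assign (2 * m) m).card : ℝ)) * Real.exp ((m : ℝ) * t ^ 2 / 2) := by
    have h1 := mgf_bound m c hc0 hc2 t
    rw [transfer m (fun z => Real.exp (t * (Sst m c z - (∑ i, c i) / 2))), factorial_eq m,
      mul_assoc] at h1
    exact (mul_le_mul_iff_right₀ hK).mp h1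
  set μ := (∑ i, c i) / 2 with hμ
  set A := Assign (2 * m) m with hA
  set f := A.filter fun z => (m : ℝ) * t ≤ Sst m c z - μ with hf
  have h2 : (f.card : ℝ) * Real.exp ((m : ℝ) * t ^ 2)
      ≤ (A.card : ℝ) * Real.exp ((m : ℝ) * t ^ 2 / 2) := by
    have e1 : (f.card : ℝ) * Real.exp ((m : ℝ) * t ^ 2)
        = ∑ _z ∈ f, Real.exp ((m : ℝ) * t ^ 2) := by
      rw [Finset.sum_const, nsmul_eq_mul]
    rw [e1]
    calc ∑ z ∈ f, Real.exp ((m : ℝ) * t ^ 2)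
        ≤ ∑ z ∈ f, Real.exp (t * (Sst m c z - μ)) := by
          apply Finset.sum_le_sum
          intro z hz
          have hz' := (Finset.mem_filter.1 hz).2
          apply Real.exp_le_exp.2
          calc (m : ℝ) * t ^ 2 = t * ((m : ℝ) * t) := by ring
            _ ≤ t * (Sst m c z - μ) := mul_le_mul_of_nonneg_left hz' ht
      _ ≤ ∑ z ∈ A, Real.exp (t * (Sst m c z - μ)) :=
          Finset.sum_le_sum_of_subset_of_nonneg (Finset.filter_subset _ _)
            (fun _ _ _ => (Real.exp_pos _).le)
      _ ≤ (A.card : ℝ) * Real.exp ((m : ℝ) * t ^ 2 / 2) := hmgfA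
  have hexp : Real.exp (-((m : ℝ) * t ^ 2) / 2) * Real.exp ((m : ℝ) * t ^ 2)
      = Real.exp ((m : ℝ) * t ^ 2 / 2) := by
    rw [← Real.exp_add]; ring_nf
  rw [← hexp, ← mul_assoc] at h2
  exact le_of_mul_le_mul_right h2 (Real.exp_pos _)

lemma chernoff_two (c : Fin (2 * m) → ℝ) (hc0 : ∀ i, 0 ≤ c i) (hc2 : ∀ i, c i ≤ 2)
    (t : ℝ) (ht : 0 ≤ t) :
    ((((Assign (2 * m) m).filter fun z => (m : ℝ) * t ≤ |Sst m c z - (∑ i, c i) / 2|).card : ℝ))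
      ≤ 2 * (((Assign (2 * m) m).card : ℝ)) * Real.exp (-((m : ℝ) * t ^ 2) / 2) := by
  classical
  set μ := (∑ i, c i) / 2 with hμ
  have hsub : (Assign (2 * m) m).filter (fun z => (m : ℝ) * t ≤ |Sst m c z - μ|)
      ⊆ ((Assign (2 * m) m).filter fun z => (m : ℝ) * t ≤ Sst m c z - μ)
        ∪ ((Assign (2 * m) m).filter fun z => (m : ℝ) * t ≤ μ - Sst m c z) := by
    intro zz hz
    simp only [Finset.mem_filter, Finset.mem_union] at *
    rcases abs_cases (Sst m c zz - μ) with ⟨he, _⟩ | ⟨he, _⟩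
    · exact Or.inl ⟨hz.1, by rw [← he]; exact hz.2⟩
    · refine Or.inr ⟨hz.1, ?_⟩
      have := hz.2
      rw [he] at this
      linarith
  have h1 := chernoff_one m c hc0 hc2 t ht
  have h2' := chernoff_one m (fun i => 2 - c i) (fun i => by simp; linarith [hc2 i])
    (fun i => by simp; linarith [hc0 i]) t ht
  have heq : (Assign (2 * m) m).filter (fun z => (m : ℝ) * t ≤ μ - Sst m c z)
      = (Assign (2 * m) m).filter
        (fun z => (m : ℝ) * t ≤ Sst m (fun i => 2 - c i) z - (∑ i, (2 - c i)) / 2) := by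
    apply Finset.filter_congr
    intro zz hzz
    have hcard : (univ.filter fun i => zz i = true).card = m := by
      simp only [Assign, Finset.mem_filter, Finset.mem_univ, true_and] at hzz
      exact hzz
    have hS2 : Sst m (fun i => 2 - c i) zz = 2 * (m : ℝ) - Sst m c zz := by
      rw [Sst, Sst]
      have hstep : ∀ i, (if zz i then ((2 : ℝ) - c i) else 0)
          = (if zz i then (2 : ℝ) else 0) - (if zz i then c i else 0) := by
        intro i; by_cases h : zz i <;> simp [h]
      rw [Finset.sum_congr rfl (fun i _ => hstep i), Finset.sum_sub_distrib]
      have h2s : ∑ i, (if zz i then (2 : ℝ) else 0) = 2 * (m : ℝ) := by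
        rw [← Finset.sum_filter, Finset.sum_const, nsmul_eq_mul, hcard]
        ring
      rw [h2s]
    have hsum2 : (∑ i : Fin (2 * m), ((2 : ℝ) - c i)) / 2 = 2 * (m : ℝ) - μ := by
      rw [Finset.sum_sub_distrib, Finset.sum_const, Finset.card_univ, Fintype.card_fin]
      rw [hμ]
      push_cast
      ring
    rw [hS2, hsum2]
    constructor <;> intro h <;> linarith
  calc (((Assign (2 * m) m).filter fun z => (m : ℝ) * t ≤ |Sst m c z - μ|).card : ℝ)
      ≤ ((((Assign (2 * m) m).filter fun z => (m : ℝ) * t ≤ Sst m c z - μ)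
        ∪ ((Assign (2 * m) m).filter fun z => (m : ℝ) * t ≤ μ - Sst m c z)).card : ℝ) := by
        exact_mod_cast Finset.card_le_card hsub
    _ ≤ (((Assign (2 * m) m).filter fun z => (m : ℝ) * t ≤ Sst m c z - μ).card : ℝ)
        + (((Assign (2 * m) m).filter fun z => (m : ℝ) * t ≤ μ - Sst m c z).card : ℝ) := by
        exact_mod_cast Finset.card_union_le _ _
    _ ≤ 2 * (((Assign (2 * m) m).card : ℝ)) * Real.exp (-((m : ℝ) * t ^ 2) / 2) := by
        rw [heq]
        have := h2'
        linarith

end Stmt2Aux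

open Stmt2Aux

/-- In a balanced design (`n = 2m`), the exact confidence interval
has length at most `√(32 log(2/α) / n)`. -/
theorem stmt2 (m : ℕ) (hm : 0 < m) (n : ℕ) (hn : n = 2 * m)
    (α : ℝ) (hα0 : 0 < α) (hα1 : α < 1)
    (Y z : Fin n → Bool) (hz : z ∈ Assign n m) :
    Ub n m α Y z - Lb n m α Y z ≤ Real.sqrt (32 * Real.log (2 / α) / (n : ℝ)) := by
  subst hn
  set r := Real.sqrt (32 * Real.log (2 / α) / ((2 * m : ℕ) : ℝ)) with hr
  have hrnn : 0 ≤ r := Real.sqrt_nonneg _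
  have hlog : 0 < Real.log (2 / α) := Real.log_pos (by rw [lt_div_iff₀ hα0]; linarith)
  have hm' : (0 : ℝ) < (m : ℝ) := by exact_mod_cast hm
  have hr2 : r ^ 2 = 32 * Real.log (2 / α) / (2 * (m : ℝ)) := by
    rw [hr, Real.sq_sqrt]
    · push_cast; ring_nf
    · positivity
  have hcardpos : (0 : ℝ) < ((Assign (2 * m) m).card : ℝ) := by
    have : (Assign (2 * m) m).Nonempty := ⟨phi m 1, phi_mem m 1⟩
    exact_mod_cast Finset.card_pos.2 this
  -- Key: any table with p-value at least α has sate within r/2 of the observed estimate.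
  have key : ∀ w : Fin (2 * m) → Bool × Bool, α ≤ pval (2 * m) m w Y z →
      |neyman (2 * m) m Y z - sate (2 * m) w| ≤ r / 2 := by
    intro w hw
    by_contra hcon
    push_neg at hcon
    set t₀ := |neyman (2 * m) m Y z - sate (2 * m) w| with ht₀
    have ht₀nn : 0 ≤ t₀ := abs_nonneg _
    set c : Fin (2 * m) → ℝ := fun j => b2r (w j).1 + b2r (w j).2 with hc
    have hc0 : ∀ i, 0 ≤ c i := by
      intro i; rw [hc]; unfold b2r; dsimp only; split <;> split <;> norm_num
    have hc2 : ∀ i, c i ≤ 2 := by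
      intro i; rw [hc]; unfold b2r; dsimp only; split <;> split <;> norm_num
    have hiden : ∀ z' : Fin (2 * m) → Bool,
        neyman (2 * m) m (obsOutcome (2 * m) w z') z' - sate (2 * m) w
          = (Sst m c z' - (∑ i, c i) / 2) / (m : ℝ) := by
      intro z'
      have e1 : (∑ j, if z' j then b2r (obsOutcome (2 * m) w z' j) else 0)
          = ∑ j, (if z' j then b2r ((w j).2) else 0) :=
        Finset.sum_congr rfl fun j _ => by
          by_cases h : z' j <;> simp [obsOutcome, h]
      have e2 : (∑ j, if z' j then 0 else b2r (obsOutcome (2 * m) w z' j))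
          = (∑ j, b2r ((w j).1)) - ∑ j, (if z' j then b2r ((w j).1) else 0) := by
        rw [← Finset.sum_sub_distrib]
        refine Finset.sum_congr rfl fun j _ => by
          by_cases h : z' j <;> simp [obsOutcome, h]
      have e3 : ∑ i, c i = (∑ j, b2r ((w j).1)) + (∑ j, b2r ((w j).2)) := by
        rw [hc, Finset.sum_add_distrib]
      have e4 : Sst m c z' = (∑ j, (if z' j then b2r ((w j).1) else 0))
          + (∑ j, (if z' j then b2r ((w j).2) else 0)) := by
        rw [Sst, hc, ← Finset.sum_add_distrib]
        refine Finset.sum_congr rfl fun j _ => by by_cases h : z' j <;> simp [h]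
      have e5 : (∑ j, (b2r ((w j).2) - b2r ((w j).1)))
          = (∑ j, b2r ((w j).2)) - (∑ j, b2r ((w j).1)) := Finset.sum_sub_distrib _ _
      rw [neyman, sate, e1, e2, e3, e4, e5]
      have hne : ((2 * m : ℕ) : ℝ) = 2 * (m : ℝ) := by push_cast; ring
      rw [hne]
      have hm0 : (m : ℝ) ≠ 0 := ne_of_gt hm'
      rw [show (2 : ℝ) * (m : ℝ) - (m : ℝ) = (m : ℝ) from by ring]
      field_simp
      ring
    have hpv : pval (2 * m) m w Y z
        = ((((Assign (2 * m) m).filter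
            fun z' => (m : ℝ) * t₀ ≤ |Sst m c z' - (∑ i, c i) / 2|).card : ℝ))
          / (((Assign (2 * m) m).card : ℝ)) := by
      rw [pval, Pr]
      congr 2
      refine congrArg Finset.card (Finset.filter_congr fun z' _ => ?_)
      rw [hiden z', ge_iff_le, ← ht₀, abs_div, abs_of_pos hm', le_div_iff₀ hm']
      constructor <;> intro h <;> nlinarith
    rw [hpv] at hw
    have hcher := chernoff_two m c hc0 hc2 t₀ ht₀nn
    have hαle : α ≤ 2 * Real.exp (-((m : ℝ) * t₀ ^ 2) / 2) := by
      rw [le_div_iff₀ hcardpos] at hw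
      have h6 := hw.trans hcher
      have h7 : α * ((Assign (2 * m) m).card : ℝ)
          ≤ (2 * Real.exp (-((m : ℝ) * t₀ ^ 2) / 2)) * ((Assign (2 * m) m).card : ℝ) := by
        nlinarith [h6]
      exact le_of_mul_le_mul_right h7 hcardpos
    set L := Real.log (2 / α) with hL
    have hexplog : Real.exp L = 2 / α := Real.exp_log (by positivity)
    have hE : Real.exp (-(2 * L)) = α ^ 2 / 4 := by
      rw [Real.exp_neg, two_mul, Real.exp_add, hexplog]
      rw [div_mul_div_comm, ← Real.rpow_natCast]
      field_simp
      norm_num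
      ring
    have hmono : Real.exp (-((m : ℝ) * t₀ ^ 2) / 2) < Real.exp (-(2 * L)) := by
      apply Real.exp_lt_exp.2
      have h7 : (r / 2) ^ 2 < t₀ ^ 2 :=
        pow_lt_pow_left₀ hcon (by positivity) (by norm_num)
      have h8 : (r / 2) ^ 2 = 8 * L / (2 * (m : ℝ)) := by
        rw [div_pow, hr2]; ring
      have h9 : 4 * L < (m : ℝ) * t₀ ^ 2 := by
        have h10 := mul_lt_mul_of_pos_left h7 hm'
        rw [h8] at h10
        have h11 : (m : ℝ) * (8 * L / (2 * (m : ℝ))) = 4 * L := by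
          field_simp; ring
        linarith
      linarith
    nlinarith [hαle, hmono, hα0, hα1]
  -- Assemble the interval bound.
  unfold Ub Lb
  rcases Set.eq_empty_or_nonempty {t : ℝ | ∃ w, PossibleTable (2 * m) w Y z
      ∧ α ≤ pval (2 * m) m w Y z ∧ sate (2 * m) w = t} with hS | hS
  · rw [hS, Real.sSup_empty, Real.sInf_empty]
    simpa using hrnn
  · have hub : sSup {t : ℝ | ∃ w, PossibleTable (2 * m) w Y z
        ∧ α ≤ pval (2 * m) m w Y z ∧ sate (2 * m) w = t}
        ≤ neyman (2 * m) m Y z + r / 2 := by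
      apply csSup_le hS
      rintro x ⟨w, _, hp, hsx⟩
      have hk := key w hp
      rw [hsx] at hk
      have := abs_le.mp hk
      linarith [this.1, this.2]
    have hlb : neyman (2 * m) m Y z - r / 2
        ≤ sInf {t : ℝ | ∃ w, PossibleTable (2 * m) w Y z
          ∧ α ≤ pval (2 * m) m w Y z ∧ sate (2 * m) w = t} := by
      apply le_csInf hS
      rintro x ⟨w, _, hp, hsx⟩
      have hk := key w hp
      rw [hsx] at hk
      have := abs_le.mp hk
      linarith [this.1, this.2]
    linarith
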